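/- For n = 4, the vector fields X⁴_a = ξ⁽⁴⁾ ∂/∂ξ^a, X³_{ab} = ξ⁽³⁾_a ∂/∂ξ^b + ξ⁽³⁾_b ∂/∂ξ^a, Y⁴_{ab} = ξ⁽⁴⁾ ∂/∂ρ^{ab}, Y³_{abc} = ξ⁽³⁾_a ∂/∂ρ^{bc} + ξ⁽³⁾_b ∂/∂ρ^{ac}, and Y²_{abcd} = ξ⁽²⁾_{ab} ∂/∂ρ^{cd} + (symmetrizations in (ac) and (bd)) all lie in the kernel of the presymplectic form ω = 𝒱_{abc}(ξ) dξ^a ∧ dρ^{bc}: ι_X ω = 0 for each of them. -/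

import Mathlib

open scoped BigOperators

noncomputable def eps {n : ℕ} (g : Fin n → Fin n) : ℝ :=
  ∑ σ : Equiv.Perm (Fin n),
    if (σ : Fin n → Fin n) = g then ((Equiv.Perm.sign σ : ℤ) : ℝ) else 0

section

variable {A : Type*} [Ring A] [Algebra ℝ A]

/-- `ξ⁽⁴⁾ = (1/4!) ε_{abcd} ξ^a ξ^b ξ^c ξ^d`. -/
noncomputable def xiFour (ξ : Fin 4 → A) : A :=
  ((24 : ℝ))⁻¹ • ∑ a, ∑ b, ∑ c, ∑ d,
    eps ![a, b, c, d] • (ξ a * ξ b * ξ c * ξ d)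

/-- `ξ⁽³⁾_e = (1/3!) ε_{e bcd} ξ^b ξ^c ξ^d`. -/
noncomputable def xiThree (ξ : Fin 4 → A) (e : Fin 4) : A :=
  ((6 : ℝ))⁻¹ • ∑ b, ∑ c, ∑ d, eps ![e, b, c, d] • (ξ b * ξ c * ξ d)

/-- `ξ⁽²⁾_{ef} = (1/2!) ε_{ef cd} ξ^c ξ^d`. -/
noncomputable def xiTwo (ξ : Fin 4 → A) (e f : Fin 4) : A :=
  ((2 : ℝ))⁻¹ • ∑ c, ∑ d, eps ![e, f, c, d] • (ξ c * ξ d)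

/-- The contraction `ι_X ω` of `ω = ε_{abcd} ξ^d dξ^a ∧ dρ^{bc}` (n = 4, where
`𝒱_{abc}(ξ) = ε_{abcd} ξ^d`) with a vector field `X` whose components along
`∂/∂ξ^a` are `Cξ a` and along `∂/∂ρ^{bc}` are `Cρ b c`. -/
noncomputable def contrOmega (ξ : Fin 4 → A) (Dξ : Fin 4 → A)
    (Dρ : Fin 4 → Fin 4 → A) (Cξ : Fin 4 → A) (Cρ : Fin 4 → Fin 4 → A) : A :=
  ∑ a, ∑ b, ∑ c, (∑ d, eps ![a, b, c, d] • ξ d) *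
    (Cξ a * Dρ b c + Dξ a * Cρ b c)

/-- The antisymmetrized component of `v ∂/∂ρ^{z w}` along `dρ^{b c}`. -/
noncomputable def dRho (v : A) (z w b c : Fin 4) : A :=
  (if b = z ∧ c = w then v else 0) - (if b = w ∧ c = z then v else 0)

end

/-- for `n = 4`, the vector fields
`X⁴_a = ξ⁽⁴⁾ ∂/∂ξ^a`, `X³_{ab} = ξ⁽³⁾_a ∂/∂ξ^b + ξ⁽³⁾_b ∂/∂ξ^a`,
`Y⁴_{ab} = ξ⁽⁴⁾ ∂/∂ρ^{ab}`, `Y³_{abc} = ξ⁽³⁾_a ∂/∂ρ^{bc} + ξ⁽³⁾_b ∂/∂ρ^{ac}`,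
`Y²_{abcd} = ξ⁽²⁾_{ab} ∂/∂ρ^{cd} + (symmetrizations in (ac) and (bd))`
all lie in the kernel of `ω = 𝒱_{abc}(ξ) dξ^a ∧ dρ^{bc} = ε_{abcd} ξ^d dξ^a ∧ dρ^{bc}`:
`ι_X ω = 0` for each of them. -/
lemma eps_comp_perm (g : Fin 4 → Fin 4) (τ : Equiv.Perm (Fin 4)) :
    eps (g ∘ τ) = ((Equiv.Perm.sign τ : ℤ) : ℝ) * eps g := by
  unfold eps
  rw [Finset.mul_sum]
  refine Fintype.sum_equiv (Equiv.mulRight τ⁻¹) _ _ ?_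
  intro σ
  simp only [Equiv.coe_mulRight]
  show (if ⇑σ = g ∘ ⇑τ then ((Equiv.Perm.sign σ : ℤ) : ℝ) else 0) = ((Equiv.Perm.sign τ : ℤ) : ℝ) * (if ⇑(σ * τ⁻¹) = g then ((Equiv.Perm.sign (σ * τ⁻¹) : ℤ) : ℝ) else 0)
  by_cases h : ⇑σ = g ∘ ⇑τ
  · rw [if_pos h, if_pos (by funext x; simp [h])]
    have hs : (Equiv.Perm.sign τ) * (Equiv.Perm.sign (σ * τ⁻¹)) = Equiv.Perm.sign σ := by
      rw [Equiv.Perm.sign_mul, Equiv.Perm.sign_inv]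
      rw [mul_comm, mul_assoc]
      simp [← Units.val_eq_one, Int.units_mul_self]
    rw [← hs]
    push_cast
    ring
  · rw [if_neg h, if_neg, mul_zero]
    intro hh
    apply h
    funext x
    have := congrArg (fun u => u (τ x)) hh
    simpa using this

lemma eps_miss (g : Fin 4 → Fin 4) (x : Fin 4) (h : ∀ i, g i ≠ x) : eps g = 0 := by
  unfold eps
  apply Finset.sum_eq_zero
  intro σ _
  rw [if_neg]
  intro hg
  exact h (σ⁻¹ x) (by rw [← hg]; simp)

lemma eps_swap_gen (i j : Fin 4) (hij : i ≠ j) (g : Fin 4 → Fin 4) :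
    eps (g ∘ ⇑(Equiv.swap i j)) = -eps g := by
  rw [eps_comp_perm, Equiv.Perm.sign_swap hij]
  norm_num

lemma eps_sw12 (a b c d : Fin 4) : eps ![b,a,c,d] = -eps ![a,b,c,d] := by
  rw [show ![b,a,c,d] = ![a,b,c,d] ∘ ⇑(Equiv.swap (0:Fin 4) 1) by
    funext i; fin_cases i <;> simp [Equiv.swap_apply_def]]
  exact eps_swap_gen _ _ (by decide) _

lemma eps_sw13 (a b c d : Fin 4) : eps ![c,b,a,d] = -eps ![a,b,c,d] := by
  rw [show ![c,b,a,d] = ![a,b,c,d] ∘ ⇑(Equiv.swap (0:Fin 4) 2) by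
    funext i; fin_cases i <;> simp [Equiv.swap_apply_def]]
  exact eps_swap_gen _ _ (by decide) _

lemma eps_sw14 (a b c d : Fin 4) : eps ![d,b,c,a] = -eps ![a,b,c,d] := by
  rw [show ![d,b,c,a] = ![a,b,c,d] ∘ ⇑(Equiv.swap (0:Fin 4) 3) by
    funext i; fin_cases i <;> simp [Equiv.swap_apply_def]]
  exact eps_swap_gen _ _ (by decide) _

lemma eps_sw23 (a b c d : Fin 4) : eps ![a,c,b,d] = -eps ![a,b,c,d] := by
  rw [show ![a,c,b,d] = ![a,b,c,d] ∘ ⇑(Equiv.swap (1:Fin 4) 2) by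
    funext i; fin_cases i <;> simp [Equiv.swap_apply_def]]
  exact eps_swap_gen _ _ (by decide) _

lemma eps_sw24 (a b c d : Fin 4) : eps ![a,d,c,b] = -eps ![a,b,c,d] := by
  rw [show ![a,d,c,b] = ![a,b,c,d] ∘ ⇑(Equiv.swap (1:Fin 4) 3) by
    funext i; fin_cases i <;> simp [Equiv.swap_apply_def]]
  exact eps_swap_gen _ _ (by decide) _

lemma eps_sw34 (a b c d : Fin 4) : eps ![a,b,d,c] = -eps ![a,b,c,d] := by
  rw [show ![a,b,d,c] = ![a,b,c,d] ∘ ⇑(Equiv.swap (2:Fin 4) 3) by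
    funext i; fin_cases i <;> simp [Equiv.swap_apply_def]]
  exact eps_swap_gen _ _ (by decide) _

lemma eps_diag12 (a c d : Fin 4) : eps ![a,a,c,d] = 0 := by
  have := eps_sw12 a a c d; linarith

lemma eps_diag23 (a b d : Fin 4) : eps ![a,b,b,d] = 0 := by
  have := eps_sw23 a b b d; linarith

lemma eps_diag24 (a b c : Fin 4) : eps ![a,b,c,b] = 0 := by
  have := eps_sw24 a b c b; linarith

lemma eps_diag34 (a b c : Fin 4) : eps ![a,b,c,c] = 0 := by
  have := eps_sw34 a b c c; linarith

section
set_option linter.unusedSectionVars false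
variable {A : Type*} [Ring A] [Algebra ℝ A]
variable (ξ : Fin 4 → A) (hξξ : ∀ a b, ξ a * ξ b = - (ξ b * ξ a))

include hξξ

lemma hsq (a : Fin 4) : ξ a * ξ a = 0 := by
  have h := hξξ a a
  have h2 : (2:ℝ) • (ξ a * ξ a) = 0 := by
    rw [two_smul]
    nth_rewrite 1 [h]
    exact neg_add_cancel _
  have h3 := congrArg (fun y => (2:ℝ)⁻¹ • y) h2
  simpa [smul_smul] using h3

lemma mv (x y : Fin 4) (z : A) : ξ x * (ξ y * z) = -(ξ y * (ξ x * z)) := by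
  rw [← mul_assoc, hξξ, neg_mul, mul_assoc]

lemma psq (x : Fin 4) (z : A) : ξ x * (ξ x * z) = 0 := by
  rw [← mul_assoc, hsq ξ hξξ, zero_mul]

lemma kill4 (x a b c d : Fin 4) (h : x = a ∨ x = b ∨ x = c ∨ x = d) :
    ξ x * (ξ a * ξ b * ξ c * ξ d) = 0 := by
  have hassoc : ξ a * ξ b * ξ c * ξ d = ξ a * (ξ b * (ξ c * ξ d)) := by
    simp [mul_assoc]
  rw [hassoc]
  rcases h with h | h | h | h <;> subst h
  · rw [psq ξ hξξ]
  · rw [mv ξ hξξ, psq ξ hξξ, mul_zero, neg_zero]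
  · rw [mv ξ hξξ, mv ξ hξξ x b, psq ξ hξξ]; simp
  · rw [mv ξ hξξ, mv ξ hξξ x b, mv ξ hξξ x c, hsq ξ hξξ]; simp

lemma kill3 (x a b c : Fin 4) (h : x = a ∨ x = b ∨ x = c) :
    ξ x * (ξ a * ξ b * ξ c) = 0 := by
  have hassoc : ξ a * ξ b * ξ c = ξ a * (ξ b * ξ c) := by simp [mul_assoc]
  rw [hassoc]
  rcases h with h | h | h <;> subst h
  · rw [psq ξ hξξ]
  · rw [mv ξ hξξ, psq ξ hξξ]; simp
  · rw [mv ξ hξξ, mv ξ hξξ x b, hsq ξ hξξ]; simp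

lemma kill2 (x a b : Fin 4) (h : x = a ∨ x = b) :
    ξ x * (ξ a * ξ b) = 0 := by
  rcases h with h | h <;> subst h
  · rw [psq ξ hξξ]
  · rw [mv ξ hξξ, hsq ξ hξξ]; simp

lemma rot3 (x y z : Fin 4) : ξ x * ξ y * ξ z = ξ z * (ξ x * ξ y) := by
  rw [mul_assoc, hξξ y z, mul_neg, mv ξ hξξ x z, neg_neg]

/-- L1 -/
lemma xL1 (x : Fin 4) : ξ x * xiFour ξ = 0 := by
  unfold xiFour
  rw [mul_smul_comm]
  simp only [Finset.mul_sum, mul_smul_comm]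
  refine smul_eq_zero_of_right _ (Finset.sum_eq_zero fun a _ =>
    Finset.sum_eq_zero fun b _ => Finset.sum_eq_zero fun c _ =>
    Finset.sum_eq_zero fun d _ => ?_)
  by_cases hx : x = a ∨ x = b ∨ x = c ∨ x = d
  · rw [kill4 ξ hξξ x a b c d hx, smul_zero]
  · push_neg at hx
    obtain ⟨h1, h2, h3, h4⟩ := hx
    rw [eps_miss _ x ?_, zero_smul]
    intro i
    fin_cases i
    exacts [Ne.symm h1, Ne.symm h2, Ne.symm h3, Ne.symm h4]

lemma xiTwo_diag (e : Fin 4) : xiTwo ξ e e = 0 := by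
  unfold xiTwo
  refine smul_eq_zero_of_right _ (Finset.sum_eq_zero fun c _ =>
    Finset.sum_eq_zero fun d _ => ?_)
  rw [eps_diag12, zero_smul]

lemma xiTwo_swap (e f : Fin 4) : xiTwo ξ e f = -xiTwo ξ f e := by
  rw [xiTwo, xiTwo, ← smul_neg]
  congr 1
  rw [← Finset.sum_neg_distrib]
  refine Finset.sum_congr rfl fun c _ => ?_
  rw [← Finset.sum_neg_distrib]
  refine Finset.sum_congr rfl fun d _ => ?_
  rw [show eps ![e,f,c,d] = -eps ![f,e,c,d] from eps_sw12 f e c d, neg_smul]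

/-- main computation: `ξ f * ξ²_{ef} = ξ³_e` for `e ≠ f`. -/
lemma xiTwo_mul_main (e f : Fin 4) (hef : e ≠ f) :
    ξ f * xiTwo ξ e f = xiThree ξ e := by
  have key : ∀ b c d : Fin 4,
      eps ![e,b,c,d] • (ξ b * ξ c * ξ d)
        = ((if b = f then eps ![e,b,c,d] • (ξ b * ξ c * ξ d) else 0)
          + (if c = f then eps ![e,b,c,d] • (ξ b * ξ c * ξ d) else 0))
          + (if d = f then eps ![e,b,c,d] • (ξ b * ξ c * ξ d) else 0) := by
    intro b c d
    by_cases hb : b = f <;> by_cases hc : c = f <;> by_cases hd : d = f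
    · simp [hb, hc, eps_diag23]
    · simp [hb, hc, eps_diag23]
    · simp [hb, hd, eps_diag24]
    · simp [hb, hc, hd]
    · simp [hc, hd, eps_diag34]
    · simp [hb, hc, hd]
    · simp [hb, hc, hd]
    · have h0 : eps ![e,b,c,d] = 0 := by
        refine eps_miss _ f ?_
        intro i
        fin_cases i
        exacts [hef, hb, hc, hd]
      simp [h0]
  have hsum : (∑ b, ∑ c, ∑ d, eps ![e,b,c,d] • (ξ b * ξ c * ξ d))
      = (3:ℝ) • ∑ c, ∑ d, eps ![e,f,c,d] • (ξ f * ξ c * ξ d) := by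
    rw [Finset.sum_congr rfl (fun b _ => Finset.sum_congr rfl (fun c _ =>
      Finset.sum_congr rfl (fun d _ => key b c d)))]
    simp only [Finset.sum_add_distrib]
    have p1 : (∑ b, ∑ c, ∑ d, if b = f then eps ![e,b,c,d] • (ξ b * ξ c * ξ d) else 0)
        = ∑ c, ∑ d, eps ![e,f,c,d] • (ξ f * ξ c * ξ d) := by
      rw [show (∑ b, ∑ c, ∑ d, if b = f then eps ![e,b,c,d] • (ξ b * ξ c * ξ d) else 0)
          = ∑ b, if b = f then ∑ c, ∑ d, eps ![e,b,c,d] • (ξ b * ξ c * ξ d) else 0 from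
        Finset.sum_congr rfl fun b _ => by by_cases hb : b = f <;> simp [hb]]
      rw [Finset.sum_ite_eq' Finset.univ f
        (fun b => ∑ c, ∑ d, eps ![e,b,c,d] • (ξ b * ξ c * ξ d))]
      simp
    have p2 : (∑ b, ∑ c, ∑ d, if c = f then eps ![e,b,c,d] • (ξ b * ξ c * ξ d) else 0)
        = ∑ c, ∑ d, eps ![e,f,c,d] • (ξ f * ξ c * ξ d) := by
      rw [show (∑ b, ∑ c, ∑ d, if c = f then eps ![e,b,c,d] • (ξ b * ξ c * ξ d) else 0)
          = ∑ b, ∑ c, if c = f then ∑ d, eps ![e,b,c,d] • (ξ b * ξ c * ξ d) else 0 from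
        Finset.sum_congr rfl fun b _ => Finset.sum_congr rfl fun c _ => by
          by_cases hc : c = f <;> simp [hc]]
      rw [show (∑ b, ∑ c, if c = f then ∑ d, eps ![e,b,c,d] • (ξ b * ξ c * ξ d) else 0)
          = ∑ b, ∑ d, eps ![e,b,f,d] • (ξ b * ξ f * ξ d) from
        Finset.sum_congr rfl fun b _ => Finset.sum_ite_eq' Finset.univ f
          (fun c => ∑ d, eps ![e,b,c,d] • (ξ b * ξ c * ξ d)) ▸ by simp]
      refine Finset.sum_congr rfl fun b _ => Finset.sum_congr rfl fun d _ => ?_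
      rw [show eps ![e,b,f,d] = -eps ![e,f,b,d] from eps_sw23 e f b d,
        show ξ b * ξ f = -(ξ f * ξ b) from hξξ b f]
      simp [neg_mul]
    have p3 : (∑ b, ∑ c, ∑ d, if d = f then eps ![e,b,c,d] • (ξ b * ξ c * ξ d) else 0)
        = ∑ c, ∑ d, eps ![e,f,c,d] • (ξ f * ξ c * ξ d) := by
      rw [show (∑ b, ∑ c, ∑ d, if d = f then eps ![e,b,c,d] • (ξ b * ξ c * ξ d) else 0)
          = ∑ b, ∑ c, eps ![e,b,c,f] • (ξ b * ξ c * ξ f) from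
        Finset.sum_congr rfl fun b _ => Finset.sum_congr rfl fun c _ =>
          Finset.sum_ite_eq' Finset.univ f
            (fun d => eps ![e,b,c,d] • (ξ b * ξ c * ξ d)) ▸ by simp]
      refine Finset.sum_congr rfl fun b _ => Finset.sum_congr rfl fun c _ => ?_
      have he : eps ![e,b,c,f] = eps ![e,f,b,c] := by
        have h1 := eps_sw34 e b f c
        have h2 := eps_sw23 e f b c
        -- h1 : eps ![e,b,c,f] = -eps ![e,b,f,c], h2 : eps ![e,b,f,c] = -eps ![e,f,b,c]
        rw [h1, h2, neg_neg]
      rw [he, rot3 ξ hξξ b c f, ← mul_assoc]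
    rw [p1, p2, p3]
    module
  rw [xiTwo, xiThree, mul_smul_comm]
  simp only [Finset.mul_sum, mul_smul_comm]
  rw [hsum]
  have : ∀ c d : Fin 4, ξ f * (ξ c * ξ d) = ξ f * ξ c * ξ d := fun c d => by
    rw [mul_assoc]
  simp only [this]
  rw [smul_smul]
  norm_num

/-- L3 -/
lemma xL3 (x e f : Fin 4) : ξ x * xiTwo ξ e f
    = (if x = f then xiThree ξ e else 0) - (if x = e then xiThree ξ f else 0) := by
  by_cases hef : e = f
  · subst hef
    rw [xiTwo_diag ξ hξξ, mul_zero]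
    simp
  · by_cases hxf : x = f
    · subst hxf
      rw [if_pos rfl, if_neg (Ne.symm hef), sub_zero]
      exact xiTwo_mul_main ξ hξξ e x hef
    · by_cases hxe : x = e
      · subst hxe
        rw [if_neg hxf, if_pos rfl, zero_sub, xiTwo_swap ξ hξξ, mul_neg,
          xiTwo_mul_main ξ hξξ f x (Ne.symm hef)]
      · rw [if_neg hxf, if_neg hxe, sub_zero]
        unfold xiTwo
        rw [mul_smul_comm]
        simp only [Finset.mul_sum, mul_smul_comm]
        refine smul_eq_zero_of_right _ (Finset.sum_eq_zero fun c _ =>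
          Finset.sum_eq_zero fun d _ => ?_)
        by_cases hx : x = c ∨ x = d
        · rw [kill2 ξ hξξ x c d hx, smul_zero]
        · push_neg at hx
          obtain ⟨h3, h4⟩ := hx
          rw [eps_miss _ x ?_, zero_smul]
          intro i
          fin_cases i
          exacts [Ne.symm hxe, Ne.symm hxf, Ne.symm h3, Ne.symm h4]

lemma I3 (e : Fin 4) : xiThree ξ e = (3:ℝ)⁻¹ • ∑ b, ξ b * xiTwo ξ e b := by
  unfold xiThree xiTwo
  simp only [mul_smul_comm, Finset.mul_sum, ← mul_assoc, ← Finset.smul_sum, smul_smul]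
  norm_num

lemma I4 : xiFour ξ = (4:ℝ)⁻¹ • ∑ a, ξ a * xiThree ξ a := by
  unfold xiFour xiThree
  simp only [mul_smul_comm, Finset.mul_sum, ← mul_assoc, ← Finset.smul_sum, smul_smul]
  norm_num

/-- L2 -/
lemma xL2 (x e : Fin 4) : ξ x * xiThree ξ e = if x = e then xiFour ξ else 0 := by
  by_cases hxe : x = e
  · subst hxe
    rw [if_pos rfl]
    have hstep : ∀ b, ξ x * (ξ b * xiTwo ξ x b)
        = (if b = x then 0 else ξ b * xiThree ξ b) := by
      intro b
      by_cases hbx : b = x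
      · subst hbx
        rw [xiTwo_diag ξ hξξ, mul_zero, mul_zero, if_pos rfl]
      · rw [if_neg hbx, mv ξ hξξ x b, xL3 ξ hξξ x x b,
          if_neg (fun h => hbx h.symm), if_pos rfl, zero_sub, mul_neg, neg_neg]
    have h1 : ξ x * xiThree ξ x
        = (3:ℝ)⁻¹ • ((∑ b, ξ b * xiThree ξ b) - ξ x * xiThree ξ x) := by
      conv_lhs => rw [I3 ξ hξξ x]
      rw [mul_smul_comm, Finset.mul_sum]
      rw [Finset.sum_congr rfl fun b _ => hstep b]
      congr 1
      rw [Finset.sum_congr rfl fun b (_ : b ∈ Finset.univ) =>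
        (show (if b = x then 0 else ξ b * xiThree ξ b)
            = ξ b * xiThree ξ b - (if b = x then ξ b * xiThree ξ b else 0) by
          by_cases hb : b = x <;> simp [hb])]
      rw [Finset.sum_sub_distrib, Finset.sum_ite_eq' Finset.univ x
        (fun b => ξ b * xiThree ξ b)]
      simp
    have h2 := congrArg (fun y => (3:ℝ) • y) h1
    simp only [smul_smul] at h2
    norm_num at h2
    have h3 : (∑ b, ξ b * xiThree ξ b) = (4:ℝ) • (ξ x * xiThree ξ x) := by
      have h4 := sub_eq_iff_eq_add.mp h2.symm
      rw [h4]
      module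
    rw [I4 ξ hξξ, h3, smul_smul]
    norm_num
  · rw [if_neg hxe]
    unfold xiThree
    rw [mul_smul_comm]
    simp only [Finset.mul_sum, mul_smul_comm]
    refine smul_eq_zero_of_right _ (Finset.sum_eq_zero fun b _ =>
      Finset.sum_eq_zero fun c _ => Finset.sum_eq_zero fun d _ => ?_)
    by_cases hx : x = b ∨ x = c ∨ x = d
    · rw [kill3 ξ hξξ x b c d hx, smul_zero]
    · push_neg at hx
      obtain ⟨h2, h3, h4⟩ := hx
      rw [eps_miss _ x ?_, zero_smul]
      intro i
      fin_cases i
      exacts [Ne.symm hxe, Ne.symm h2, Ne.symm h3, Ne.symm h4]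

lemma SA (a b c : Fin 4) : (∑ d, eps ![a,b,c,d] • ξ d) * xiFour ξ = 0 := by
  rw [Finset.sum_mul]
  exact Finset.sum_eq_zero fun d _ => by
    rw [smul_mul_assoc, xL1 ξ hξξ, smul_zero]

lemma SB (a b c e : Fin 4) :
    (∑ d, eps ![a,b,c,d] • ξ d) * xiThree ξ e = eps ![a,b,c,e] • xiFour ξ := by
  rw [Finset.sum_mul]
  rw [Finset.sum_congr rfl fun d (_ : d ∈ Finset.univ) =>
    (show (eps ![a,b,c,d] • ξ d) * xiThree ξ e
        = if d = e then eps ![a,b,c,d] • xiFour ξ else 0 by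
      rw [smul_mul_assoc, xL2 ξ hξξ]
      split <;> simp)]
  rw [Finset.sum_ite_eq' Finset.univ e (fun d => eps ![a,b,c,d] • xiFour ξ)]
  simp

lemma SC (a b c e f : Fin 4) :
    (∑ d, eps ![a,b,c,d] • ξ d) * xiTwo ξ e f
      = eps ![a,b,c,f] • xiThree ξ e - eps ![a,b,c,e] • xiThree ξ f := by
  rw [Finset.sum_mul]
  rw [Finset.sum_congr rfl fun d (_ : d ∈ Finset.univ) =>
    (show (eps ![a,b,c,d] • ξ d) * xiTwo ξ e f
        = (if d = f then eps ![a,b,c,d] • xiThree ξ e else 0)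
          - (if d = e then eps ![a,b,c,d] • xiThree ξ f else 0) by
      rw [smul_mul_assoc, xL3 ξ hξξ, smul_sub]
      congr 1 <;> (split <;> simp))]
  rw [Finset.sum_sub_distrib,
    Finset.sum_ite_eq' Finset.univ f (fun d => eps ![a,b,c,d] • xiThree ξ e),
    Finset.sum_ite_eq' Finset.univ e (fun d => eps ![a,b,c,d] • xiThree ξ f)]
  simp

end
lemma collapse {A : Type*} [Ring A] [Algebra ℝ A]
    (T : Fin 4 → Fin 4 → A) (z w : Fin 4) :
    (∑ b, ∑ c, if b = z ∧ c = w then T b c else 0) = T z w := by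
  have h1 : ∀ b, (∑ c, if b = z ∧ c = w then T b c else 0)
      = if b = z then T b w else 0 := by
    intro b
    by_cases hb : b = z
    · simp only [hb, true_and, if_pos rfl]
      rw [Finset.sum_ite_eq' Finset.univ w (fun c => T z c)]
      simp
    · simp [hb]
  rw [Finset.sum_congr rfl fun b _ => h1 b,
    Finset.sum_ite_eq' Finset.univ z (fun b => T b w)]
  simp


theorem kernel_vector_fields_n4
    (A : Type*) [Ring A] [Algebra ℝ A]
    (ξ : Fin 4 → A) (ρ : Fin 4 → Fin 4 → A)
    (Dξ : Fin 4 → A) (Dρ : Fin 4 → Fin 4 → A)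
    (hρa : ∀ a b, ρ a b = - ρ b a)
    (hDρa : ∀ a b, Dρ a b = - Dρ b a)
    (hξξ : ∀ a b, ξ a * ξ b = - (ξ b * ξ a))
    (hξρ : ∀ a b c, ξ a * ρ b c = - (ρ b c * ξ a))
    (hρρ : ∀ a b c d, ρ a b * ρ c d = - (ρ c d * ρ a b))
    (hDξc : ∀ a x, Dξ a * x = x * Dξ a)
    (hDρc : ∀ a b x, Dρ a b * x = x * Dρ a b) :
    -- X⁴_e
    (∀ e, contrOmega ξ Dξ Dρ
        (fun b => if b = e then xiFour ξ else 0) 0 = 0) ∧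
    -- X³_{ef}
    (∀ e f, contrOmega ξ Dξ Dρ
        (fun b => (if b = f then xiThree ξ e else 0)
          + (if b = e then xiThree ξ f else 0)) 0 = 0) ∧
    -- Y⁴_{ef}
    (∀ e f, contrOmega ξ Dξ Dρ 0
        (fun b c => dRho (xiFour ξ) e f b c) = 0) ∧
    -- Y³_{efg}
    (∀ e f g, contrOmega ξ Dξ Dρ 0
        (fun b c => dRho (xiThree ξ e) f g b c
          + dRho (xiThree ξ f) e g b c) = 0) ∧
    -- Y²_{efgh}
    (∀ e f g h, contrOmega ξ Dξ Dρ 0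
        (fun b c => dRho (xiTwo ξ e f) g h b c
          + dRho (xiTwo ξ g f) e h b c
          + dRho (xiTwo ξ e h) g f b c
          + dRho (xiTwo ξ g h) e f b c) = 0) := by
  refine ⟨?_, ?_, ?_, ?_, ?_⟩
  -- Part 1 : X⁴
  · intro e
    unfold contrOmega
    refine Finset.sum_eq_zero fun a _ => Finset.sum_eq_zero fun b _ =>
      Finset.sum_eq_zero fun c _ => ?_
    simp only [Pi.zero_apply, mul_zero, add_zero]
    by_cases ha : a = e
    · rw [if_pos ha, ← mul_assoc, SA ξ hξξ, zero_mul]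
    · rw [if_neg ha, zero_mul, mul_zero]
  -- Part 2 : X³
  · intro e f
    unfold contrOmega
    rw [Finset.sum_comm]
    refine Finset.sum_eq_zero fun b _ => ?_
    rw [Finset.sum_comm]
    refine Finset.sum_eq_zero fun c _ => ?_
    simp only [Pi.zero_apply, mul_zero, add_zero, add_mul, mul_add, ite_mul,
      zero_mul, mul_ite, mul_zero]
    rw [Finset.sum_add_distrib,
      Finset.sum_ite_eq' Finset.univ f
        (fun a => (∑ d, eps ![a,b,c,d] • ξ d) * (xiThree ξ e * Dρ b c)),
      Finset.sum_ite_eq' Finset.univ e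
        (fun a => (∑ d, eps ![a,b,c,d] • ξ d) * (xiThree ξ f * Dρ b c))]
    simp only [Finset.mem_univ, if_true]
    rw [← mul_assoc, ← mul_assoc, SB ξ hξξ f b c e, SB ξ hξξ e b c f,
      smul_mul_assoc, smul_mul_assoc,
      show eps ![f,b,c,e] = -eps ![e,b,c,f] from eps_sw14 e b c f,
      neg_smul, neg_add_cancel]
  -- Part 3 : Y⁴
  · intro e f
    unfold contrOmega dRho
    refine Finset.sum_eq_zero fun a _ => Finset.sum_eq_zero fun b _ =>
      Finset.sum_eq_zero fun c _ => ?_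
    simp only [Pi.zero_apply, zero_mul, zero_add]
    rw [hDξc a, ← mul_assoc, mul_sub]
    simp only [mul_ite, mul_zero, SA ξ hξξ]
    simp
  -- Part 4 : Y³
  · intro e f g
    unfold contrOmega dRho
    refine Finset.sum_eq_zero fun a _ => ?_
    simp only [Pi.zero_apply, zero_mul, zero_add, hDξc]
    simp only [← mul_assoc]
    simp only [mul_add, mul_sub, add_mul, sub_mul, mul_ite, mul_zero, ite_mul, zero_mul]
    simp only [Finset.sum_add_distrib, Finset.sum_sub_distrib, collapse]
    rw [SB ξ hξξ a f g e, SB ξ hξξ a g f e, SB ξ hξξ a e g f, SB ξ hξξ a g e f]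
    have q1 : eps ![a,g,f,e] = -eps ![a,f,g,e] := eps_sw23 a f g e
    have q2 : eps ![a,e,g,f] = -eps ![a,f,g,e] := eps_sw24 a f g e
    have q3 : eps ![a,g,e,f] = eps ![a,f,g,e] := by
      have h1 := eps_sw23 a e g f
      rw [h1, q2]; ring
    rw [q1, q2, q3]
    simp only [smul_mul_assoc, neg_smul]
    module
  -- Part 5 : Y²
  · intro e f g h
    unfold contrOmega dRho
    refine Finset.sum_eq_zero fun a _ => ?_
    simp only [Pi.zero_apply, zero_mul, zero_add, hDξc]
    simp only [← mul_assoc]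
    simp only [mul_add, mul_sub, add_mul, sub_mul, mul_ite, mul_zero, ite_mul, zero_mul]
    simp only [Finset.sum_add_distrib, Finset.sum_sub_distrib, collapse]
    rw [SC ξ hξξ a g h e f, SC ξ hξξ a h g e f,
      SC ξ hξξ a e h g f, SC ξ hξξ a h e g f,
      SC ξ hξξ a g f e h, SC ξ hξξ a f g e h,
      SC ξ hξξ a e f g h, SC ξ hξξ a f e g h]
    -- representatives
    have qe2 : eps ![a,h,g,f] = -eps ![a,g,h,f] := eps_sw23 a g h f
    have qe3 : eps ![a,g,f,h] = -eps ![a,g,h,f] := by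
      have := eps_sw34 a g f h; linarith
    have qe4 : eps ![a,f,g,h] = eps ![a,g,h,f] := by
      have := eps_sw23 a g f h; rw [this, qe3]; ring
    have qf2 : eps ![a,h,g,e] = -eps ![a,g,h,e] := eps_sw23 a g h e
    have qf3 : eps ![a,e,h,g] = -eps ![a,g,h,e] := eps_sw24 a g h e
    have qf4 : eps ![a,h,e,g] = eps ![a,g,h,e] := by
      have := eps_sw23 a e h g; rw [this, qf3]; ring
    have qg2 : eps ![a,h,e,f] = -eps ![a,e,h,f] := eps_sw23 a e h f
    have qg3 : eps ![a,e,f,h] = -eps ![a,e,h,f] := by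
      have := eps_sw34 a e f h; linarith
    have qg4 : eps ![a,f,e,h] = eps ![a,e,h,f] := by
      have := eps_sw23 a e f h; rw [this, qg3]; ring
    have qh2 : eps ![a,f,g,e] = -eps ![a,g,f,e] := eps_sw23 a g f e
    have qh3 : eps ![a,e,f,g] = -eps ![a,g,f,e] := eps_sw24 a g f e
    have qh4 : eps ![a,f,e,g] = eps ![a,g,f,e] := by
      have := eps_sw23 a e f g; rw [this, qh3]; ring
    rw [qe2, qe3, qe4, qf2, qf3, qf4, qg2, qg3, qg4, qh2, qh3, qh4]
    simp only [smul_mul_assoc, neg_smul, sub_mul]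
    module
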